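/- Cost-to-go estimate at a global maximizer: Let α ≥ 0, assume each diagonal block C_{ii} of C is positive semidefinite, and let Ĝ ∈ O(d)^{⊗n} be a global maximizer of (QP). Then for every G ∈ O(d)^{⊗n}, f(Ĝ) − f(G) ≤ (‖C̃‖ + ‖C̃Ĝ‖_∞) · d(G,Ĝ)², where f(G) := tr(Gᵀ C G). -/

import Mathlib

open Matrix BigOperators

noncomputable section
namespace GroupSync

variable {n d : ℕ}

/-- The old Mathlib `Matrix.PosSemidef.sqrt` (removed since), reproduced verbatim. -/
def posSemidefSqrt {m : Type*} [Fintype m] [DecidableEq m] {A : Matrix m m ℝ}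
    (hA : A.PosSemidef) : Matrix m m ℝ :=
  (hA.1.eigenvectorUnitary : Matrix m m ℝ) * diagonal ((↑) ∘ (√·) ∘ hA.1.eigenvalues) *
    (star hA.1.eigenvectorUnitary : Matrix m m ℝ)

/-- The old Mathlib `Matrix.isHermitian_transpose_mul_self` (removed since). -/
theorem isHermitian_transpose_mul_self' {m k : Type*} [Fintype m] (A : Matrix m k ℝ) :
    (Aᵀ * A).IsHermitian := by
  simp [IsHermitian, conjTranspose_eq_transpose_of_trivial]

/-- Frobenius norm of a real matrix. -/
def frob {m k : Type*} [Fintype m] [Fintype k] (X : Matrix m k ℝ) : ℝ :=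
  Real.sqrt (∑ i, ∑ j, (X i j) ^ 2)

/-- Spectral (operator) norm of a real matrix: the operator norm of the induced
linear map between Euclidean spaces. -/
def spec {m k : Type*} [Fintype m] [Fintype k] [DecidableEq k] (X : Matrix m k ℝ) : ℝ :=
  ‖LinearMap.toContinuousLinearMap (Matrix.toEuclideanLin X)‖

/-- Nuclear norm: trace of the positive semidefinite square root of `X * Xᵀ`
(i.e. the sum of the singular values of `X`). -/
def nuclear {m k : Type*} [Fintype m] [Fintype k] [DecidableEq m] (X : Matrix m k ℝ) : ℝ :=
  (posSemidefSqrt (Matrix.posSemidef_self_mul_conjTranspose X)).trace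

/-- The positive semidefinite square root of `X * Xᵀ`. -/
def psdSqrtMulT {m k : Type*} [Fintype m] [Fintype k] [DecidableEq m] (X : Matrix m k ℝ) :
    Matrix m m ℝ :=
  posSemidefSqrt (Matrix.posSemidef_self_mul_conjTranspose X)

/-- Membership in the orthogonal group `O(d)`. -/
def IsOd (g : Matrix (Fin d) (Fin d) ℝ) : Prop :=
  gᵀ * g = 1 ∧ g * gᵀ = 1

/-- Membership in the special orthogonal group `SO(d)`. -/
def IsSOd (g : Matrix (Fin d) (Fin d) ℝ) : Prop :=
  IsOd g ∧ g.det = 1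

/-- The `i`-th `d × d` block of an `nd × d` matrix. -/
def blk (X : Matrix (Fin n × Fin d) (Fin d) ℝ) (i : Fin n) : Matrix (Fin d) (Fin d) ℝ :=
  Matrix.of fun a b => X (i, a) b

/-- Membership in `O(d)^{⊗n}`: every `d × d` block is orthogonal. -/
def OdN (G : Matrix (Fin n × Fin d) (Fin d) ℝ) : Prop :=
  ∀ i : Fin n, IsOd (blk G i)

/-- Membership in `SO(d)^{⊗n}`. -/
def SOdN (G : Matrix (Fin n × Fin d) (Fin d) ℝ) : Prop :=
  ∀ i : Fin n, IsSOd (blk G i)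

/-- The `i`-th block column (an `nd × d` matrix) of an `nd × nd` matrix. -/
def bcol (M : Matrix (Fin n × Fin d) (Fin n × Fin d) ℝ) (i : Fin n) :
    Matrix (Fin n × Fin d) (Fin d) ℝ :=
  Matrix.of fun p b => M p (i, b)

/-- The `ij`-th `d × d` block of an `nd × nd` matrix. -/
def dblk (M : Matrix (Fin n × Fin d) (Fin n × Fin d) ℝ) (i j : Fin n) :
    Matrix (Fin d) (Fin d) ℝ :=
  Matrix.of fun a b => M (i, a) (j, b)

/-- `G' ∈ T_α(G)` (where `Ct = C + α I`): `G' ∈ O(d)^{⊗n}` and each block `G'_i` is a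
nearest point of `C̃ᵢᵀ G` in `O(d)` w.r.t. the Frobenius norm. -/
def InT (Ct : Matrix (Fin n × Fin d) (Fin n × Fin d) ℝ)
    (G G' : Matrix (Fin n × Fin d) (Fin d) ℝ) : Prop :=
  OdN G' ∧ ∀ i : Fin n, ∀ X : Matrix (Fin d) (Fin d) ℝ, IsOd X →
    frob (blk G' i - (bcol Ct i)ᵀ * G) ≤ frob (X - (bcol Ct i)ᵀ * G)

/-- `G' ∈ ST_α(G)`: the `SO(d)` analogue of `InT`. -/
def InST (Ct : Matrix (Fin n × Fin d) (Fin n × Fin d) ℝ)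
    (G G' : Matrix (Fin n × Fin d) (Fin d) ℝ) : Prop :=
  SOdN G' ∧ ∀ i : Fin n, ∀ X : Matrix (Fin d) (Fin d) ℝ, IsSOd X →
    frob (blk G' i - (bcol Ct i)ᵀ * G) ≤ frob (X - (bcol Ct i)ᵀ * G)

/-- The quotient distance `d(X, Y) = min_{g ∈ O(d)} ‖X − Y g‖_F`. -/
def dOrth (X Y : Matrix (Fin n × Fin d) (Fin d) ℝ) : ℝ :=
  ⨅ g : {g : Matrix (Fin d) (Fin d) ℝ // IsOd g}, frob (X - Y * g.1)

/-- The objective function `f(G) = tr(Gᵀ C G)`. -/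
def obj (C : Matrix (Fin n × Fin d) (Fin n × Fin d) ℝ)
    (G : Matrix (Fin n × Fin d) (Fin d) ℝ) : ℝ :=
  Matrix.trace (Gᵀ * C * G)

/-- Hadamard (entrywise) product. -/
def had {m k : Type*} (X Y : Matrix m k ℝ) : Matrix m k ℝ :=
  Matrix.of fun p q => X p q * Y p q

/-- `W ⊗ (1_d 1_dᵀ)`, the Kronecker product of `W` with the all-ones `d × d` matrix. -/
def kron1 (W : Matrix (Fin n) (Fin n) ℝ) : Matrix (Fin n × Fin d) (Fin n × Fin d) ℝ :=
  Matrix.kroneckerMap (· * ·) W (Matrix.of fun (_ _ : Fin d) => (1 : ℝ))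

/-- The all-ones matrix `1_m 1_mᵀ`. -/
def onesMat (m : Type*) : Matrix m m ℝ :=
  Matrix.of fun _ _ => (1 : ℝ)

/-- `symblockdiag`: symmetrize the diagonal `d × d` blocks, zero out all other blocks. -/
def sbd (X : Matrix (Fin n × Fin d) (Fin n × Fin d) ℝ) :
    Matrix (Fin n × Fin d) (Fin n × Fin d) ℝ :=
  Matrix.of fun p q => if p.1 = q.1 then (X p q + X (p.1, q.2) (q.1, p.2)) / 2 else 0

/-- `S(G) = symblockdiag(C G Gᵀ) − C`. -/
def Smat (C : Matrix (Fin n × Fin d) (Fin n × Fin d) ℝ)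
    (G : Matrix (Fin n × Fin d) (Fin d) ℝ) : Matrix (Fin n × Fin d) (Fin n × Fin d) ℝ :=
  sbd (C * (G * Gᵀ)) - C

/-- `G` is a second-order critical point of (QP): `S(G) G = 0` and
`⟨H, S(G) H⟩ ≥ 0` for all tangent directions `H` (blockwise `Hᵢ Gᵢᵀ` skew-symmetric). -/
def IsSOC (C : Matrix (Fin n × Fin d) (Fin n × Fin d) ℝ)
    (G : Matrix (Fin n × Fin d) (Fin d) ℝ) : Prop :=
  Smat C G * G = 0 ∧
  ∀ H : Matrix (Fin n × Fin d) (Fin d) ℝ,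
    (∀ i : Fin n, (blk H i * (blk G i)ᵀ)ᵀ = -(blk H i * (blk G i)ᵀ)) →
    0 ≤ Matrix.trace (Hᵀ * (Smat C G * H))

/-- Smallest singular value of a square matrix, as the minimum of `‖M v‖` over
unit vectors `v`. -/
def sigmaMin (M : Matrix (Fin d) (Fin d) ℝ) : ℝ :=
  ⨅ v : {v : Fin d → ℝ // ∑ a, (v a) ^ 2 = 1}, Real.sqrt (∑ a, (M.mulVec v.1 a) ^ 2)

/-- The singular values of a square matrix: square roots of the eigenvalues of `Mᵀ M`. -/
def singVal (M : Matrix (Fin d) (Fin d) ℝ) (l : Fin d) : ℝ :=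
  Real.sqrt ((isHermitian_transpose_mul_self' M).eigenvalues l)

/-- Smallest eigenvalue of a (symmetric) matrix, as the minimum Rayleigh quotient
over unit vectors. -/
def lambdaMin {m : Type*} [Fintype m] (M : Matrix m m ℝ) : ℝ :=
  ⨅ v : {v : m → ℝ // ∑ i, (v i) ^ 2 = 1}, v.1 ⬝ᵥ M.mulVec v.1

/-- `D_α(G)`: block diagonal of the psd square roots of `(C̃ᵢᵀ G)(C̃ᵢᵀ G)ᵀ`, minus `C̃`. -/
def Dmat (Ct : Matrix (Fin n × Fin d) (Fin n × Fin d) ℝ)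
    (G : Matrix (Fin n × Fin d) (Fin d) ℝ) : Matrix (Fin n × Fin d) (Fin n × Fin d) ℝ :=
  (Matrix.of fun p q =>
    if p.1 = q.1 then psdSqrtMulT ((bcol Ct p.1)ᵀ * G) p.2 q.2 else 0) - Ct

/-- The residual function `ρ_α(G) = ‖D_α(G) G‖_F`. -/
def rho (Ct : Matrix (Fin n × Fin d) (Fin n × Fin d) ℝ)
    (G : Matrix (Fin n × Fin d) (Fin d) ℝ) : ℝ :=
  frob (Dmat Ct G * G)

/-- Blockwise infinity norm: `‖X‖_∞ = max_i ‖X_i‖` (spectral norm of the blocks). -/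
def binf (X : Matrix (Fin n × Fin d) (Fin d) ℝ) : ℝ :=
  ⨆ i : Fin n, spec (blk X i)

variable {m k : Type*} [Fintype m] [Fintype k]

lemma frob_nonneg (X : Matrix m k ℝ) : 0 ≤ frob X := Real.sqrt_nonneg _

lemma frob_sq (X : Matrix m k ℝ) : frob X ^ 2 = ∑ i, ∑ j, (X i j) ^ 2 := by
  rw [frob, Real.sq_sqrt]
  positivity

lemma frob_neg (X : Matrix m k ℝ) : frob (-X) = frob X := by
  simp [frob]

lemma frob_sub_comm (X Y : Matrix m k ℝ) : frob (X - Y) = frob (Y - X) := by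
  rw [← frob_neg (X - Y)]; congr 1; abel

lemma spec_nonneg [DecidableEq k] (X : Matrix m k ℝ) : 0 ≤ spec X := norm_nonneg _

lemma mulVec_sq_le [DecidableEq k] (X : Matrix m k ℝ) (v : k → ℝ) :
    ∑ a, (X.mulVec v a) ^ 2 ≤ spec X ^ 2 * ∑ b, (v b) ^ 2 := by
  have h := (LinearMap.toContinuousLinearMap (Matrix.toEuclideanLin X)).le_opNorm
    ((WithLp.equiv 2 (k → ℝ)).symm v)
  have h1 : ‖(LinearMap.toContinuousLinearMap (Matrix.toEuclideanLin X))
      ((WithLp.equiv 2 (k → ℝ)).symm v)‖ = Real.sqrt (∑ a, (X.mulVec v a) ^ 2) := by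
    rw [LinearMap.coe_toContinuousLinearMap', Matrix.toEuclideanLin_apply,
      EuclideanSpace.norm_eq]
    congr 1
    refine Finset.sum_congr rfl fun a _ => ?_
    simp [Real.norm_eq_abs, sq_abs]
  have h2 : ‖(WithLp.equiv 2 (k → ℝ)).symm v‖ = Real.sqrt (∑ b, (v b) ^ 2) := by
    rw [EuclideanSpace.norm_eq]
    congr 1
    refine Finset.sum_congr rfl fun a _ => ?_
    simp [Real.norm_eq_abs, sq_abs]
  rw [h1, h2] at h
  have h3 : (0:ℝ) ≤ spec X * Real.sqrt (∑ b, (v b) ^ 2) :=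
    mul_nonneg (spec_nonneg X) (Real.sqrt_nonneg _)
  have := mul_self_le_mul_self (Real.sqrt_nonneg (∑ a, (X.mulVec v a) ^ 2)) h
  calc ∑ a, (X.mulVec v a) ^ 2
      = Real.sqrt (∑ a, (X.mulVec v a) ^ 2) * Real.sqrt (∑ a, (X.mulVec v a) ^ 2) := by
        rw [Real.mul_self_sqrt]; positivity
    _ ≤ (spec X * Real.sqrt (∑ b, (v b) ^ 2)) * (spec X * Real.sqrt (∑ b, (v b) ^ 2)) := this
    _ = spec X ^ 2 * (Real.sqrt (∑ b, (v b) ^ 2) * Real.sqrt (∑ b, (v b) ^ 2)) := by ring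
    _ = spec X ^ 2 * ∑ b, (v b) ^ 2 := by rw [Real.mul_self_sqrt]; positivity

lemma spec_le_bound [DecidableEq k] (X : Matrix m k ℝ) (c : ℝ) (hc : 0 ≤ c)
    (h : ∀ v : k → ℝ, ∑ a, (X.mulVec v a) ^ 2 ≤ c ^ 2 * ∑ b, (v b) ^ 2) : spec X ≤ c := by
  apply ContinuousLinearMap.opNorm_le_bound _ hc
  intro x
  rw [LinearMap.coe_toContinuousLinearMap', Matrix.toEuclideanLin_apply,
    EuclideanSpace.norm_eq, EuclideanSpace.norm_eq]
  have e1 : ∀ i, ‖((WithLp.equiv 2 (m → ℝ)).symm (X *ᵥ (WithLp.equiv 2 (k → ℝ)) x)) i‖ ^ 2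
      = (X.mulVec ((WithLp.equiv 2 (k → ℝ)) x) i) ^ 2 := fun i => by
    simp [Real.norm_eq_abs, sq_abs]
  have e2 : ∀ i, ‖x i‖ ^ 2 = (((WithLp.equiv 2 (k → ℝ)) x) i) ^ 2 := fun i => by
    simp [Real.norm_eq_abs, sq_abs]
  simp only [e1, e2, Real.norm_eq_abs, sq_abs]
  set v := (WithLp.equiv 2 (k → ℝ)) x
  calc Real.sqrt (∑ i, (X.mulVec v i) ^ 2) ≤ Real.sqrt (c ^ 2 * ∑ b, (v b) ^ 2) :=
        Real.sqrt_le_sqrt (h v)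
    _ = c * Real.sqrt (∑ b, (v b) ^ 2) := by
        rw [Real.sqrt_mul (by positivity), Real.sqrt_sq hc]

lemma qform_le [DecidableEq k] (M : Matrix k k ℝ) (v : k → ℝ) :
    ∑ a, v a * M.mulVec v a ≤ spec M * ∑ a, (v a) ^ 2 := by
  have hcs := Finset.sum_mul_sq_le_sq_mul_sq Finset.univ v (M.mulVec v)
  have h2 := mulVec_sq_le M v
  have hv : (0:ℝ) ≤ ∑ a, (v a) ^ 2 := by positivity
  have hp : (0:ℝ) ≤ spec M * ∑ a, (v a) ^ 2 := mul_nonneg (spec_nonneg M) hv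
  have hsq : (∑ a, v a * M.mulVec v a) ^ 2 ≤ (spec M * ∑ a, (v a) ^ 2) ^ 2 := by
    calc (∑ a, v a * M.mulVec v a) ^ 2 ≤ (∑ a, (v a) ^ 2) * ∑ a, (M.mulVec v a) ^ 2 := hcs
      _ ≤ (∑ a, (v a) ^ 2) * (spec M ^ 2 * ∑ b, (v b) ^ 2) :=
          mul_le_mul_of_nonneg_left h2 hv
      _ = (spec M * ∑ a, (v a) ^ 2) ^ 2 := by ring
  calc ∑ a, v a * M.mulVec v a ≤ |∑ a, v a * M.mulVec v a| := le_abs_self _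
    _ = Real.sqrt ((∑ a, v a * M.mulVec v a) ^ 2) := (Real.sqrt_sq_eq_abs _).symm
    _ ≤ Real.sqrt ((spec M * ∑ a, (v a) ^ 2) ^ 2) := Real.sqrt_le_sqrt hsq
    _ = spec M * ∑ a, (v a) ^ 2 := Real.sqrt_sq hp

def IsOd' {d : Type*} [Fintype d] [DecidableEq d] (g : Matrix d d ℝ) : Prop :=
  gᵀ * g = 1 ∧ g * gᵀ = 1

variable {q : Type*} [Fintype q] [DecidableEq q]

lemma IsOd'.transpose {g : Matrix q q ℝ} (hg : IsOd' g) : IsOd' gᵀ :=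
  ⟨by rw [transpose_transpose]; exact hg.2, by rw [transpose_transpose]; exact hg.1⟩

lemma IsOd'.mulVec_sq {g : Matrix q q ℝ} (hg : IsOd' g) (v : q → ℝ) :
    ∑ a, (g.mulVec v a) ^ 2 = ∑ a, (v a) ^ 2 := by
  calc ∑ a, (g.mulVec v a) ^ 2 = (g.mulVec v) ⬝ᵥ (g.mulVec v) := by simp [dotProduct, sq]
    _ = v ⬝ᵥ ((gᵀ * g).mulVec v) := by
        conv_rhs => rw [← Matrix.mulVec_mulVec, Matrix.dotProduct_mulVec,
          Matrix.vecMul_transpose]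
    _ = ∑ a, (v a) ^ 2 := by rw [hg.1]; simp [dotProduct, sq]

lemma dot_orth_le {Q : Matrix q q ℝ} (hQ : IsOd' Q) (x : q → ℝ) :
    x ⬝ᵥ Q.mulVec x ≤ ∑ a, (x a) ^ 2 := by
  have hcs := Finset.sum_mul_sq_le_sq_mul_sq Finset.univ x (Q.mulVec x)
  rw [hQ.mulVec_sq x] at hcs
  have hx : (0:ℝ) ≤ ∑ a, (x a) ^ 2 := by positivity
  have : (x ⬝ᵥ Q.mulVec x) ^ 2 ≤ (∑ a, (x a) ^ 2) ^ 2 := by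
    calc (x ⬝ᵥ Q.mulVec x) ^ 2 = (∑ a, x a * Q.mulVec x a) ^ 2 := by rfl
      _ ≤ (∑ a, (x a) ^ 2) * ∑ a, (x a) ^ 2 := hcs
      _ = (∑ a, (x a) ^ 2) ^ 2 := (sq _).symm
  calc x ⬝ᵥ Q.mulVec x ≤ |x ⬝ᵥ Q.mulVec x| := le_abs_self _
    _ = Real.sqrt ((x ⬝ᵥ Q.mulVec x) ^ 2) := (Real.sqrt_sq_eq_abs _).symm
    _ ≤ Real.sqrt ((∑ a, (x a) ^ 2) ^ 2) := Real.sqrt_le_sqrt this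
    _ = ∑ a, (x a) ^ 2 := Real.sqrt_sq hx

lemma spec_mul_orth_le {m : Type*} [Fintype m] (A : Matrix m q ℝ) {g : Matrix q q ℝ}
    (hg : IsOd' g) : spec (A * g) ≤ spec A := by
  apply spec_le_bound _ _ (spec_nonneg A)
  intro v
  rw [← Matrix.mulVec_mulVec]
  calc ∑ a, (A.mulVec (g.mulVec v) a) ^ 2 ≤ spec A ^ 2 * ∑ b, (g.mulVec v b) ^ 2 :=
        mulVec_sq_le A _
    _ = spec A ^ 2 * ∑ b, (v b) ^ 2 := by rw [hg.mulVec_sq]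

lemma spec_mul_orth {m : Type*} [Fintype m] (A : Matrix m q ℝ) {g : Matrix q q ℝ}
    (hg : IsOd' g) : spec (A * g) = spec A := by
  refine le_antisymm (spec_mul_orth_le A hg) ?_
  have : A = (A * g) * gᵀ := by rw [Matrix.mul_assoc, hg.2, Matrix.mul_one]
  calc spec A = spec ((A * g) * gᵀ) := by rw [← this]
    _ ≤ spec (A * g) := spec_mul_orth_le _ hg.transpose

lemma trace_tmul {m : Type*} [Fintype m] (X Y : Matrix m q ℝ) :
    Matrix.trace (Xᵀ * Y) = ∑ p, ∑ b, X p b * Y p b := by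
  rw [Matrix.trace]
  simp only [Matrix.diag_apply, Matrix.mul_apply, Matrix.transpose_apply]
  exact Finset.sum_comm

lemma frob_sq_eq_trace {m : Type*} [Fintype m] (X : Matrix m q ℝ) :
    frob X ^ 2 = Matrix.trace (Xᵀ * X) := by
  rw [frob_sq, trace_tmul]
  simp [sq]

lemma finsupp_qform_nonneg {M : Matrix q q ℝ} {x : q →₀ ℝ}
    (h : 0 ≤ ⇑x ⬝ᵥ M *ᵥ ⇑x) : 0 ≤ x.sum fun i xi => x.sum fun j xj => star xi * M i j * xj := by
  simpa [dotProduct, mulVec, Finsupp.sum_fintype, Finset.mul_sum, mul_assoc] using h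

open scoped MatrixOrder in
lemma psd_sqrt_exists {A : Matrix q q ℝ} (hA : A.PosSemidef) :
    ∃ B : Matrix q q ℝ, B * B = A ∧ Bᵀ = B := by
  obtain ⟨X, hX, -, h⟩ := CFC.exists_sqrt_of_isSelfAdjoint_of_quasispectrumRestricts hA.isHermitian
    (QuasispectrumRestricts.nnreal_of_nonneg hA.nonneg)
  have hXt : Xᵀ = X := by
    rw [← conjTranspose_eq_transpose_of_trivial, ← star_eq_conjTranspose]; exact hX.star_eq
  exact ⟨X, by simpa using h, hXt⟩

lemma tr_mul_psd (M A : Matrix q q ℝ) (hA : A.PosSemidef) :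
    Matrix.trace (M * A) ≤ spec M * Matrix.trace A := by
  obtain ⟨B, hBB, hBs⟩ := psd_sqrt_exists hA
  have h1 : Matrix.trace (M * A) = Matrix.trace (B * M * B) := by
    rw [← hBB, ← Matrix.mul_assoc, Matrix.trace_mul_comm (M * B) B, Matrix.mul_assoc,
      ← Matrix.mul_assoc]
  have h2 : Matrix.trace (B * M * B) = ∑ c, ∑ a, B a c * M.mulVec (fun x => B x c) a := by
    have e : B * M * B = Bᵀ * (M * B) := by rw [hBs, Matrix.mul_assoc]
    rw [e, trace_tmul, Finset.sum_comm]
    rfl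
  have h3 : ∀ c, ∑ a, B a c * M.mulVec (fun x => B x c) a ≤ spec M * ∑ a, (B a c) ^ 2 :=
    fun c => qform_le M _
  have hA' : A = Bᵀ * B := by rw [hBs, hBB]
  have h4 : Matrix.trace A = ∑ c, ∑ a, (B a c) ^ 2 := by
    rw [hA', trace_tmul, Finset.sum_comm]
    simp [sq]
  calc Matrix.trace (M * A) = Matrix.trace (B * M * B) := h1
    _ = ∑ c, ∑ a, B a c * M.mulVec (fun x => B x c) a := h2
    _ ≤ ∑ c, spec M * ∑ a, (B a c) ^ 2 := Finset.sum_le_sum fun c _ => h3 c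
    _ = spec M * ∑ c, ∑ a, (B a c) ^ 2 := by rw [Finset.mul_sum]
    _ = spec M * Matrix.trace A := by rw [h4]

lemma psd_one_sub_halfsym {Q : Matrix q q ℝ} (hQ : IsOd' Q) :
    ((1 : Matrix q q ℝ) - (1/2 : ℝ) • (Q + Qᵀ)).PosSemidef := by
  constructor
  · have h : ((1 : Matrix q q ℝ) - (1/2 : ℝ) • (Q + Qᵀ))ᵀ
        = (1 : Matrix q q ℝ) - (1/2 : ℝ) • (Q + Qᵀ) := by
      rw [transpose_sub, transpose_smul, transpose_add, transpose_one, transpose_transpose,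
        add_comm]
    have hct : ∀ M : Matrix q q ℝ, Mᴴ = Mᵀ := fun M => by
      ext i j; simp [Matrix.conjTranspose_apply]
    show _ᴴ = _
    rw [hct, h]
  · intro x
    have hQt : x ⬝ᵥ Qᵀ.mulVec x = x ⬝ᵥ Q.mulVec x := by
      rw [Matrix.dotProduct_mulVec, Matrix.vecMul_transpose, dotProduct_comm]
    have key : x ⬝ᵥ ((1 : Matrix q q ℝ) - (1/2 : ℝ) • (Q + Qᵀ)).mulVec x
        = (∑ a, (x a) ^ 2) - x ⬝ᵥ Q.mulVec x := by
      rw [Matrix.sub_mulVec, dotProduct_sub, Matrix.smul_mulVec, dotProduct_smul,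
        Matrix.add_mulVec, dotProduct_add, hQt, Matrix.one_mulVec]
      have hxx : x ⬝ᵥ x = ∑ a, (x a) ^ 2 := by simp [dotProduct, sq]
      rw [hxx]
      simp only [smul_eq_mul]
      ring
    have hle := dot_orth_le hQ x
    have : (0:ℝ) ≤ x ⬝ᵥ ((1 : Matrix q q ℝ) - (1/2 : ℝ) • (Q + Qᵀ)).mulVec x := by
      rw [key]; linarith
    exact finsupp_qform_nonneg this

lemma trace_mul_std (N : Matrix q q ℝ) (i j : q) :
    Matrix.trace (N * single i j (1:ℝ)) = N j i := by
  simp [Matrix.trace, Matrix.diag, Matrix.mul_apply, Matrix.single, Matrix.of_apply,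
    ite_and, Finset.sum_ite_eq]

lemma stdBasisMatrix_transpose' (i j : q) :
    (single i j (1:ℝ))ᵀ = single j i (1:ℝ) := by
  ext x y
  simp [Matrix.single, and_comm]

lemma sym_psd_of_trace_le (N : Matrix q q ℝ)
    (h : ∀ R : Matrix q q ℝ, IsOd' R → Matrix.trace (N * R) ≤ Matrix.trace N) :
    Nᵀ = N ∧ N.PosSemidef := by
  have quad : ∀ v : q → ℝ, 0 ≤ v ⬝ᵥ N.mulVec v := by
    intro v
    by_cases hv : v = 0
    · simp [hv]
    · have hs : 0 < ∑ a, (v a) ^ 2 := by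
        have hex : ∃ a, v a ≠ 0 := by
          by_contra hc
          push_neg at hc
          exact hv (funext hc)
        obtain ⟨a, ha⟩ := hex
        have h1 : 0 < (v a) ^ 2 := by positivity
        exact lt_of_lt_of_le h1 (Finset.single_le_sum (f := fun a => (v a)^2)
          (fun b _ => by positivity) (Finset.mem_univ a))
      set s := ∑ a, (v a) ^ 2 with hsdef
      set c : ℝ := 2 / s with hcdef
      set V := Matrix.vecMulVec v v with hVdef
      have hVt : Vᵀ = V := by
        ext x y; simp [hVdef, Matrix.vecMulVec_apply, mul_comm]
      have hVV : V * V = s • V := by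
        ext x y
        simp only [hVdef, Matrix.mul_apply, Matrix.vecMulVec_apply, Matrix.smul_apply,
          smul_eq_mul]
        calc ∑ k, (v x * v k) * (v k * v y) = ∑ k, (v k) ^ 2 * (v x * v y) :=
              Finset.sum_congr rfl fun k _ => by ring
          _ = s * (v x * v y) := by rw [← Finset.sum_mul]
      have hcc : c * c * s = c + c := by
        rw [hcdef]; field_simp; ring
      have hmul : ((1 : Matrix q q ℝ) - c • V) * ((1 : Matrix q q ℝ) - c • V) = 1 := by
        have e1 : ((1 : Matrix q q ℝ) - c • V) * ((1 : Matrix q q ℝ) - c • V)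
            = 1 - c • V - (c • V - (c * c * s) • V) := by
          rw [sub_mul, one_mul, mul_sub, mul_one, Matrix.smul_mul, Matrix.mul_smul,
            smul_smul, hVV, smul_smul]
        rw [e1, hcc, add_smul]
        abel
      have hR : IsOd' ((1 : Matrix q q ℝ) - c • V) := by
        have hRt : ((1 : Matrix q q ℝ) - c • V)ᵀ = 1 - c • V := by
          rw [transpose_sub, transpose_one, transpose_smul, hVt]
        exact ⟨by rw [hRt]; exact hmul, by rw [hRt]; exact hmul⟩
      have htrNV : Matrix.trace (N * V) = v ⬝ᵥ N.mulVec v := by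
        rw [Matrix.trace]
        simp only [Matrix.diag_apply, Matrix.mul_apply, hVdef, Matrix.vecMulVec_apply,
          dotProduct, Matrix.mulVec]
        refine Finset.sum_congr rfl fun x _ => ?_
        rw [Finset.mul_sum]
        exact Finset.sum_congr rfl fun k _ => by ring
      have htr : Matrix.trace (N * ((1 : Matrix q q ℝ) - c • V))
          = Matrix.trace N - c * (v ⬝ᵥ N.mulVec v) := by
        rw [mul_sub, mul_one, Matrix.trace_sub, Matrix.mul_smul, Matrix.trace_smul, htrNV,
          smul_eq_mul]
      have hh := h _ hR
      rw [htr] at hh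
      have hcpos : 0 < c := by rw [hcdef]; positivity
      nlinarith [hh]
  -- symmetry via Givens rotations
  have symab : ∀ a b : q, N a b = N b a := by
    intro a b
    by_cases hab : a = b
    · rw [hab]
    · set P : Matrix q q ℝ := single a a 1 + single b b 1 with hPdef
      set K : Matrix q q ℝ := single b a 1 - single a b 1 with hKdef
      have hba : b ≠ a := fun hc => hab hc.symm
      have mo : ∀ (i j k l : q), j ≠ k →
          single i j (1:ℝ) * single k l 1 = 0 :=
        fun i j k l hjk => Matrix.single_mul_single_of_ne (c := (1:ℝ)) i j k hjk 1
      have ms : ∀ i j k : q, single i j (1:ℝ) * single j k 1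
          = single i k 1 := fun i j k => by
        simpa using Matrix.single_mul_single_same (c := (1:ℝ)) i j k 1
      have hPP : P * P = P := by
        rw [hPdef, add_mul, mul_add, mul_add, ms a a a, mo a a b b hab, mo b b a a hba,
          ms b b b]
        abel
      have hPK : P * K = K := by
        rw [hPdef, hKdef, add_mul, mul_sub, mul_sub, mo a a b a hab, ms a a b, ms b b a,
          mo b b a b hba]
        abel
      have hKP : K * P = K := by
        rw [hPdef, hKdef, sub_mul, mul_add, mul_add, ms b a a, mo b a b b hab,
          mo a b a a hba, ms a b b]
        abel
      have hKK : K * K = -P := by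
        rw [hPdef, hKdef, sub_mul, mul_sub, mul_sub, mo b a b a hab, ms b a b, ms a b a,
          mo a b a b hba]
        abel
      have hPt : Pᵀ = P := by
        rw [hPdef, transpose_add, stdBasisMatrix_transpose', stdBasisMatrix_transpose']
      have hKt : Kᵀ = -K := by
        rw [hKdef, transpose_sub, stdBasisMatrix_transpose', stdBasisMatrix_transpose']
        abel
      have expand : ∀ x y u w : ℝ,
          ((1 : Matrix q q ℝ) + x • P + y • K) * ((1 : Matrix q q ℝ) + u • P + w • K)
          = 1 + (x + u + x*u - y*w) • P + (y + w + x*w + y*u) • K := by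
        intro x y u w
        rw [add_mul, add_mul, mul_add, mul_add, mul_add, mul_add, mul_add, mul_add]
        simp only [one_mul, mul_one, Matrix.smul_mul, Matrix.mul_smul, smul_smul,
          hPP, hPK, hKP, hKK, smul_neg]
        module
      have key : ∀ cc ss : ℝ, cc ^ 2 + ss ^ 2 = 1 →
          (cc - 1) * (N a a + N b b) + ss * (N a b - N b a) ≤ 0 := by
        intro cc ss hcs
        set R : Matrix q q ℝ := 1 + (cc - 1) • P + ss • K with hRdef
        have hRt : Rᵀ = 1 + (cc - 1) • P + (-ss) • K := by
          rw [hRdef, transpose_add, transpose_add, transpose_one, transpose_smul,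
            transpose_smul, hPt, hKt, smul_neg, neg_smul]
        have hcoef : (cc - 1) + (cc - 1) + (cc - 1)*(cc - 1) + ss*ss = 0 := by nlinarith [hcs]
        have hR : IsOd' R := by
          constructor
          · rw [hRt, hRdef, expand]
            have e1 : (cc - 1) + (cc - 1) + (cc - 1)*(cc - 1) - (-ss)*ss = 0 := by nlinarith [hcs]
            have e2 : (-ss) + ss + (cc - 1)*ss + (-ss)*(cc - 1) = 0 := by ring
            rw [e1, e2]
            simp
          · rw [hRdef, hRt, expand]
            have e1 : (cc - 1) + (cc - 1) + (cc - 1)*(cc - 1) - ss*(-ss) = 0 := by nlinarith [hcs]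
            have e2 : ss + (-ss) + (cc - 1)*(-ss) + ss*(cc - 1) = 0 := by ring
            rw [e1, e2]
            simp
        have htr : Matrix.trace (N * R)
            = Matrix.trace N + (cc - 1) * (N a a + N b b) + ss * (N a b - N b a) := by
          rw [hRdef, mul_add, mul_add, Matrix.trace_add, Matrix.trace_add, mul_one,
            Matrix.mul_smul, Matrix.mul_smul, Matrix.trace_smul, Matrix.trace_smul,
            hPdef, hKdef, mul_add, mul_sub, Matrix.trace_add, Matrix.trace_sub,
            trace_mul_std, trace_mul_std, trace_mul_std, trace_mul_std]
          simp only [smul_eq_mul]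
        have hh := h R hR
        rw [htr] at hh
        linarith
      -- choose cc, ss
      set p : ℝ := N a a + N b b with hpdef
      set qq : ℝ := N a b - N b a with hqdef
      have hq0 : qq = 0 := by
        set r : ℝ := Real.sqrt (p ^ 2 + qq ^ 2) with hrdef
        by_cases hr : r = 0
        · have h0 : p ^ 2 + qq ^ 2 ≤ 0 := Real.sqrt_eq_zero'.mp hr
          have h1 : qq ^ 2 = 0 := le_antisymm (by nlinarith [sq_nonneg p]) (sq_nonneg qq)
          exact sq_eq_zero_iff.mp h1
        · have hrpos : 0 < r := lt_of_le_of_ne (Real.sqrt_nonneg _) (Ne.symm hr)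
          have hr2 : r ^ 2 = p ^ 2 + qq ^ 2 := Real.sq_sqrt (by positivity)
          have hcs : (p / r) ^ 2 + (qq / r) ^ 2 = 1 := by
            field_simp
            linarith [hr2]
          have hk := key (p / r) (qq / r) hcs
          have habs : |p| ≤ r := by
            rw [hrdef]
            calc |p| = Real.sqrt (p ^ 2) := (Real.sqrt_sq_eq_abs p).symm
              _ ≤ Real.sqrt (p ^ 2 + qq ^ 2) := Real.sqrt_le_sqrt (by nlinarith [sq_nonneg qq])
          have hple : p ≤ |p| := le_abs_self p
          -- from hk : (p/r - 1) * p + (qq/r) * qq ≤ 0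
          have hexp : p ^ 2 + qq ^ 2 ≤ p * r := by
            have h1 : ((p / r - 1) * p + (qq / r) * qq) * r ≤ 0 :=
              mul_nonpos_of_nonpos_of_nonneg hk (le_of_lt hrpos)
            have h2 : ((p / r - 1) * p + (qq / r) * qq) * r = p ^ 2 + qq ^ 2 - p * r := by
              field_simp
              ring
            linarith [h2 ▸ h1]
          nlinarith [hexp, hr2, habs, hple, hrpos]
      rw [hqdef] at hq0
      linarith [hq0]
  have hsym : Nᵀ = N := by
    ext x y
    rw [Matrix.transpose_apply]
    exact symab y x
  have hct : ∀ M : Matrix q q ℝ, Mᴴ = Mᵀ := fun M => by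
    ext i j; simp [Matrix.conjTranspose_apply]
  refine ⟨hsym, ⟨by rw [Matrix.IsHermitian, hct, hsym], fun x => finsupp_qform_nonneg (quad x)⟩⟩

lemma isOd_isOd' {g : Matrix (Fin d) (Fin d) ℝ} (h : IsOd g) : IsOd' g := h

lemma IsOd'.mul {g h : Matrix q q ℝ} (hg : IsOd' g) (hh : IsOd' h) : IsOd' (g * h) := by
  constructor
  · rw [transpose_mul, Matrix.mul_assoc, ← Matrix.mul_assoc gᵀ, hg.1, Matrix.one_mul, hh.1]
  · rw [transpose_mul, Matrix.mul_assoc, ← Matrix.mul_assoc h, hh.2, Matrix.one_mul, hg.2]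

lemma blk_mul (X : Matrix (Fin n × Fin d) (Fin d) ℝ) (g : Matrix (Fin d) (Fin d) ℝ)
    (i : Fin n) : blk (X * g) i = blk X i * g := by
  ext a b
  simp [blk, Matrix.mul_apply]

lemma blk_add (X Y : Matrix (Fin n × Fin d) (Fin d) ℝ) (i : Fin n) :
    blk (X + Y) i = blk X i + blk Y i := by
  ext a b; simp [blk]

lemma blk_sub (X Y : Matrix (Fin n × Fin d) (Fin d) ℝ) (i : Fin n) :
    blk (X - Y) i = blk X i - blk Y i := by
  ext a b; simp [blk]

lemma trace_blocks (X Y : Matrix (Fin n × Fin d) (Fin d) ℝ) :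
    Matrix.trace (Xᵀ * Y) = ∑ i, Matrix.trace ((blk X i)ᵀ * blk Y i) := by
  rw [trace_tmul, Fintype.sum_prod_type]
  refine Finset.sum_congr rfl fun i _ => ?_
  rw [trace_tmul]
  rfl

lemma frob_sq_blocks (X : Matrix (Fin n × Fin d) (Fin d) ℝ) :
    frob X ^ 2 = ∑ i, frob (blk X i) ^ 2 := by
  rw [frob_sq, Fintype.sum_prod_type]
  refine Finset.sum_congr rfl fun i _ => ?_
  rw [frob_sq]
  rfl

lemma blk_mul_big (M : Matrix (Fin n × Fin d) (Fin n × Fin d) ℝ)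
    (E : Matrix (Fin n × Fin d) (Fin d) ℝ) (i : Fin n) :
    blk (M * E) i = ∑ j, dblk M i j * blk E j := by
  ext a b
  simp only [blk, dblk, Matrix.of_apply, Matrix.mul_apply, Matrix.sum_apply]
  rw [Fintype.sum_prod_type]

lemma OdN.mul_orth {G : Matrix (Fin n × Fin d) (Fin d) ℝ} (hG : OdN G)
    {g : Matrix (Fin d) (Fin d) ℝ} (hg : IsOd g) : OdN (G * g) := by
  intro i
  rw [blk_mul]
  exact (isOd_isOd' (hG i)).mul (isOd_isOd' hg)

lemma trace_t3 {C : Matrix (Fin n × Fin d) (Fin n × Fin d) ℝ} (hCsymm : Cᵀ = C)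
    (A B : Matrix (Fin n × Fin d) (Fin d) ℝ) :
    Matrix.trace (Aᵀ * (C * B)) = Matrix.trace (Bᵀ * (C * A)) := by
  rw [← Matrix.trace_transpose (Aᵀ * (C * B)), transpose_mul, transpose_mul,
    transpose_transpose, hCsymm, Matrix.mul_assoc, Matrix.trace_mul_comm]

lemma obj_expand {C : Matrix (Fin n × Fin d) (Fin n × Fin d) ℝ} (hCsymm : Cᵀ = C)
    (H E : Matrix (Fin n × Fin d) (Fin d) ℝ) :
    obj C (H + E) = obj C H + 2 * Matrix.trace (Eᵀ * (C * H))
      + Matrix.trace (Eᵀ * (C * E)) := by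
  rw [obj, obj]
  simp only [transpose_add, Matrix.add_mul, Matrix.mul_add, Matrix.trace_add]
  have e1 : Matrix.trace (Hᵀ * C * E) = Matrix.trace (Eᵀ * (C * H)) := by
    rw [Matrix.mul_assoc]
    exact trace_t3 hCsymm H E
  have e2 : Matrix.trace (Eᵀ * C * H) = Matrix.trace (Eᵀ * (C * H)) := by
    rw [Matrix.mul_assoc]
  have e3 : Matrix.trace (Eᵀ * C * E) = Matrix.trace (Eᵀ * (C * E)) := by
    rw [Matrix.mul_assoc]
  rw [e1, e2, e3]
  ring

lemma obj_mul_orth (C : Matrix (Fin n × Fin d) (Fin n × Fin d) ℝ)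
    (G : Matrix (Fin n × Fin d) (Fin d) ℝ) {g : Matrix (Fin d) (Fin d) ℝ} (hg : IsOd g) :
    obj C (G * g) = obj C G := by
  rw [obj, obj, transpose_mul, Matrix.mul_assoc gᵀ Gᵀ C,
    Matrix.mul_assoc gᵀ (Gᵀ * C) (G * g), Matrix.trace_mul_comm,
    Matrix.mul_assoc (Gᵀ * C) (G * g) gᵀ, Matrix.mul_assoc G g gᵀ, hg.2, Matrix.mul_one]

lemma obj_shift (C : Matrix (Fin n × Fin d) (Fin n × Fin d) ℝ) (α : ℝ)
    {G : Matrix (Fin n × Fin d) (Fin d) ℝ} (hG : OdN G) :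
    obj (C + α • (1 : Matrix (Fin n × Fin d) (Fin n × Fin d) ℝ)) G
      = obj C G + α * (n * d) := by
  rw [obj, obj]
  simp only [Matrix.mul_add, Matrix.add_mul, Matrix.trace_add]
  congr 1
  rw [Matrix.mul_smul, Matrix.mul_one, Matrix.smul_mul, Matrix.trace_smul, smul_eq_mul]
  congr 1
  rw [trace_blocks G G]
  have h1 : ∀ i : Fin n, Matrix.trace ((blk G i)ᵀ * blk G i) = (d : ℝ) := fun i => by
    rw [(hG i).1, Matrix.trace_one]
    simp
  rw [Finset.sum_congr rfl fun i _ => h1 i]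
  simp [mul_comm]

lemma spec_le_binf (X : Matrix (Fin n × Fin d) (Fin d) ℝ) (i : Fin n) :
    spec (blk X i) ≤ binf X := by
  unfold binf
  exact le_ciSup (f := fun j : Fin n => spec (blk X j))
    (Set.Finite.bddAbove (Set.finite_range _)) i

lemma spec_neg {m k : Type*} [Fintype m] [Fintype k] [DecidableEq k] (X : Matrix m k ℝ) :
    spec (-X) = spec X := by
  simp [spec, map_neg]

set_option maxHeartbeats 1000000 in
lemma block_opt (C : Matrix (Fin n × Fin d) (Fin n × Fin d) ℝ) (hCsymm : Cᵀ = C)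
    (hCdiag : ∀ i : Fin n, (dblk C i i).PosSemidef)
    {H : Matrix (Fin n × Fin d) (Fin d) ℝ} (hH : OdN H)
    (hmax : ∀ G : Matrix (Fin n × Fin d) (Fin d) ℝ, OdN G → obj C G ≤ obj C H)
    (i : Fin n) :
    (blk (C * H) i * (blk H i)ᵀ)ᵀ = blk (C * H) i * (blk H i)ᵀ
      ∧ (blk (C * H) i * (blk H i)ᵀ).PosSemidef := by
  set Y := blk (C * H) i with hYdef
  set Hi := blk H i with hHidef
  set Cii := dblk C i i with hCiidef
  have hCiit : Ciiᵀ = Cii := (by simpa using (hCdiag i).isHermitian : (dblk C i i).IsSymm)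
  have hHi : IsOd' Hi := hH i
  have opt : ∀ X : Matrix (Fin d) (Fin d) ℝ, IsOd' X →
      2 * Matrix.trace ((X - Hi)ᵀ * Y)
        + Matrix.trace ((X - Hi)ᵀ * (Cii * (X - Hi))) ≤ 0 := by
    intro X hX
    set E : Matrix (Fin n × Fin d) (Fin d) ℝ :=
      Matrix.of (fun p b => if p.1 = i then (X - Hi) p.2 b else 0) with hEdef
    have hblkE : ∀ j, blk E j = if j = i then X - Hi else 0 := by
      intro j; ext a b
      by_cases hj : j = i <;> simp [blk, hEdef, hj]
    have hOdN : OdN (H + E) := by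
      intro j
      rw [blk_add, hblkE j]
      by_cases hj : j = i
      · rw [if_pos hj, hj, ← hHidef]
        have e : Hi + (X - Hi) = X := by abel
        rw [e]
        exact hX
      · rw [if_neg hj, add_zero]
        exact hH j
    have hobj := hmax (H + E) hOdN
    rw [obj_expand hCsymm H E] at hobj
    have t1 : Matrix.trace (Eᵀ * (C * H)) = Matrix.trace ((X - Hi)ᵀ * Y) := by
      rw [trace_blocks, Finset.sum_eq_single i]
      · rw [hblkE i, if_pos rfl, hYdef]
      · intro j _ hj
        rw [hblkE j, if_neg hj]
        simp
      · intro hmem; exact absurd (Finset.mem_univ i) hmem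
    have hCE : blk (C * E) i = Cii * (X - Hi) := by
      rw [blk_mul_big, Finset.sum_eq_single i]
      · rw [hblkE i, if_pos rfl, hCiidef]
      · intro j _ hj
        rw [hblkE j, if_neg hj, Matrix.mul_zero]
      · intro hmem; exact absurd (Finset.mem_univ i) hmem
    have t2 : Matrix.trace (Eᵀ * (C * E))
        = Matrix.trace ((X - Hi)ᵀ * (Cii * (X - Hi))) := by
      rw [trace_blocks, Finset.sum_eq_single i]
      · rw [hblkE i, if_pos rfl, hCE]
      · intro j _ hj
        rw [hblkE j, if_neg hj]
        simp
      · intro hmem; exact absurd (Finset.mem_univ i) hmem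
    rw [t1, t2] at hobj
    linarith
  have haux : ∀ A B : Matrix (Fin d) (Fin d) ℝ,
      Matrix.trace (Aᵀ * (Cii * B)) = Matrix.trace (Cii * (B * Aᵀ)) := fun A B => by
    rw [Matrix.trace_mul_comm, Matrix.mul_assoc]
  have tcond : ∀ R : Matrix (Fin d) (Fin d) ℝ, IsOd' R →
      Matrix.trace ((Y * Hiᵀ - Cii) * R) ≤ Matrix.trace (Y * Hiᵀ - Cii) := by
    intro R hR
    have hX : IsOd' (Rᵀ * Hi) := hR.transpose.mul hHi
    have h0 := opt (Rᵀ * Hi) hX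
    set X1 := Rᵀ * Hi with hX1def
    have hX1t : X1ᵀ = Hiᵀ * R := by
      rw [hX1def, transpose_mul, transpose_transpose]
    have e1 : Matrix.trace ((X1 - Hi)ᵀ * Y)
        = Matrix.trace ((Y * Hiᵀ) * R) - Matrix.trace (Y * Hiᵀ) := by
      have g1 : (X1 - Hi)ᵀ * Y = Hiᵀ * R * Y - Hiᵀ * Y := by
        rw [transpose_sub, Matrix.sub_mul, hX1t]
      have g2 : Matrix.trace (Hiᵀ * R * Y) = Matrix.trace ((Y * Hiᵀ) * R) := by
        rw [Matrix.trace_mul_comm, ← Matrix.mul_assoc]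
      have g3 : Matrix.trace (Hiᵀ * Y) = Matrix.trace (Y * Hiᵀ) :=
        Matrix.trace_mul_comm _ _
      rw [g1, Matrix.trace_sub, g2, g3]
    have e2 : Matrix.trace ((X1 - Hi)ᵀ * (Cii * (X1 - Hi)))
        = 2 * Matrix.trace Cii - 2 * Matrix.trace (Cii * R) := by
      have expand : (X1 - Hi)ᵀ * (Cii * (X1 - Hi))
          = X1ᵀ * (Cii * X1) - X1ᵀ * (Cii * Hi) - Hiᵀ * (Cii * X1) + Hiᵀ * (Cii * Hi) := by
        rw [transpose_sub]
        noncomm_ring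
      rw [expand, Matrix.trace_add, Matrix.trace_sub, Matrix.trace_sub,
        haux X1 X1, haux X1 Hi, haux Hi X1, haux Hi Hi]
      have f1 : X1 * X1ᵀ = 1 := hX.2
      have f2 : Hi * X1ᵀ = R := by
        rw [hX1t, ← Matrix.mul_assoc, hHi.2, Matrix.one_mul]
      have f3 : X1 * Hiᵀ = Rᵀ := by
        rw [hX1def, Matrix.mul_assoc, hHi.2, Matrix.mul_one]
      have f4 : Hi * Hiᵀ = 1 := hHi.2
      rw [f1, f2, f3, f4, Matrix.mul_one]
      have f5 : Matrix.trace (Cii * Rᵀ) = Matrix.trace (Cii * R) := by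
        rw [← Matrix.trace_transpose (Cii * Rᵀ), transpose_mul, transpose_transpose, hCiit,
          Matrix.trace_mul_comm]
      rw [f5]
      ring
    rw [e1, e2] at h0
    rw [Matrix.sub_mul, Matrix.trace_sub, Matrix.trace_sub]
    linarith
  obtain ⟨hNt, hNpsd⟩ := sym_psd_of_trace_le (Y * Hiᵀ - Cii) tcond
  have hM : Y * Hiᵀ = (Y * Hiᵀ - Cii) + Cii := by abel
  constructor
  · rw [hM, transpose_add, hNt, hCiit]
  · rw [hM]
    exact hNpsd.add (hCdiag i)

lemma block_bound (C : Matrix (Fin n × Fin d) (Fin n × Fin d) ℝ) (hCsymm : Cᵀ = C)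
    (hCdiag : ∀ i : Fin n, (dblk C i i).PosSemidef)
    {H : Matrix (Fin n × Fin d) (Fin d) ℝ} (hH : OdN H)
    (hmax : ∀ G : Matrix (Fin n × Fin d) (Fin d) ℝ, OdN G → obj C G ≤ obj C H)
    {G : Matrix (Fin n × Fin d) (Fin d) ℝ} (hG : OdN G) (i : Fin n) :
    2 * Matrix.trace ((blk (H - G) i)ᵀ * blk (C * H) i)
      ≤ spec (blk (C * H) i) * frob (blk (H - G) i) ^ 2 := by
  obtain ⟨hMt, hMpsd⟩ := block_opt C hCsymm hCdiag hH hmax i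
  set Y := blk (C * H) i with hYdef
  set Hi := blk H i with hHidef
  set Gi := blk G i with hGidef
  set M := Y * Hiᵀ with hMdef
  have hHi : IsOd' Hi := hH i
  have hGi : IsOd' Gi := hG i
  have hYM : M * Hi = Y := by
    rw [hMdef, Matrix.mul_assoc, hHi.1, Matrix.mul_one]
  set Q := Hi * Giᵀ with hQdef
  have hQ : IsOd' Q := hHi.mul hGi.transpose
  have hΔ : blk (H - G) i = Hi - Gi := blk_sub H G i
  have t1 : Matrix.trace ((Hi - Gi)ᵀ * Y) = Matrix.trace (M * (1 - Q)) := by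
    rw [← hYM, Matrix.trace_mul_comm, Matrix.mul_assoc]
    have e : Hi * (Hi - Gi)ᵀ = 1 - Q := by
      rw [transpose_sub, Matrix.mul_sub, hHi.2, hQdef]
    rw [e]
  set A := (1 : Matrix (Fin d) (Fin d) ℝ) - (1/2 : ℝ) • (Q + Qᵀ) with hAdef
  have t2 : Matrix.trace (M * (1 - Q)) = Matrix.trace (M * A) := by
    have hMQ : Matrix.trace (M * Qᵀ) = Matrix.trace (M * Q) := by
      rw [← Matrix.trace_transpose (M * Qᵀ), transpose_mul, transpose_transpose, hMt,
        Matrix.trace_mul_comm]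
    rw [hAdef, Matrix.mul_sub, Matrix.mul_one, Matrix.trace_sub, Matrix.mul_sub,
      Matrix.mul_one, Matrix.trace_sub, Matrix.mul_smul, Matrix.trace_smul, Matrix.mul_add,
      Matrix.trace_add, hMQ]
    simp only [smul_eq_mul]
    ring
  have t3 : Matrix.trace (M * A) ≤ spec M * Matrix.trace A :=
    tr_mul_psd M A (psd_one_sub_halfsym hQ)
  have htrQ : Matrix.trace Q = Matrix.trace (Giᵀ * Hi) := by
    rw [hQdef, Matrix.trace_mul_comm]
  have hfr : frob (Hi - Gi) ^ 2 = 2 * (d : ℝ) - 2 * Matrix.trace Q := by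
    rw [frob_sq_eq_trace, transpose_sub, Matrix.sub_mul, Matrix.mul_sub, Matrix.mul_sub,
      Matrix.trace_sub, Matrix.trace_sub, Matrix.trace_sub, hHi.1, hGi.1]
    have e1 : Matrix.trace (Hiᵀ * Gi) = Matrix.trace (Giᵀ * Hi) := by
      rw [← Matrix.trace_transpose (Hiᵀ * Gi), transpose_mul, transpose_transpose]
    rw [e1, htrQ, Matrix.trace_one]
    simp
    ring
  have t4 : Matrix.trace A = frob (Hi - Gi) ^ 2 / 2 := by
    rw [hAdef, Matrix.trace_sub, Matrix.trace_smul, Matrix.trace_add,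
      Matrix.trace_transpose, Matrix.trace_one, hfr, Fintype.card_fin]
    simp only [smul_eq_mul]
    ring
  have t5 : spec M = spec Y := by
    rw [← hYM]
    exact (spec_mul_orth M hHi).symm
  have hspec : 0 ≤ spec M := spec_nonneg M
  calc 2 * Matrix.trace ((blk (H - G) i)ᵀ * blk (C * H) i)
      = 2 * Matrix.trace (M * A) := by rw [hΔ, ← hYdef, t1, t2]
    _ ≤ 2 * (spec M * Matrix.trace A) := by linarith [t3]
    _ = spec Y * frob (Hi - Gi) ^ 2 := by rw [t4, t5]; ring
    _ = spec (blk (C * H) i) * frob (blk (H - G) i) ^ 2 := by rw [hΔ, hYdef]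

lemma key_ineq (C : Matrix (Fin n × Fin d) (Fin n × Fin d) ℝ) (hCsymm : Cᵀ = C)
    (hCdiag : ∀ i : Fin n, (dblk C i i).PosSemidef)
    {H : Matrix (Fin n × Fin d) (Fin d) ℝ} (hH : OdN H)
    (hmax : ∀ G : Matrix (Fin n × Fin d) (Fin d) ℝ, OdN G → obj C G ≤ obj C H)
    {G : Matrix (Fin n × Fin d) (Fin d) ℝ} (hG : OdN G) :
    obj C H - obj C G ≤ (spec C + binf (C * H)) * frob (H - G) ^ 2 := by
  set Δ := H - G with hΔdef
  have hGHΔ : G = H + (-Δ) := by rw [hΔdef]; abel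
  have hid : obj C G = obj C H - 2 * Matrix.trace (Δᵀ * (C * H))
      + Matrix.trace (Δᵀ * (C * Δ)) := by
    rw [hGHΔ, obj_expand hCsymm H (-Δ)]
    simp only [transpose_neg, Matrix.neg_mul, Matrix.mul_neg, neg_neg, Matrix.trace_neg]
    ring
  have hquad : - Matrix.trace (Δᵀ * (C * Δ)) ≤ spec C * frob Δ ^ 2 := by
    have h1 : Matrix.trace (Δᵀ * (C * Δ))
        = ∑ b, ∑ p, Δ p b * (C.mulVec (fun x => Δ x b)) p := by
      rw [trace_tmul, Finset.sum_comm]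
      rfl
    have h2 : ∀ b, ∑ p, Δ p b * ((-C).mulVec (fun x => Δ x b)) p
        ≤ spec (-C) * ∑ p, (Δ p b) ^ 2 := fun b => qform_le (-C) _
    have hneg : ∀ b, ∑ p, Δ p b * ((-C).mulVec (fun x => Δ x b)) p
        = - ∑ p, Δ p b * (C.mulVec (fun x => Δ x b)) p := fun b => by
      simp [Matrix.neg_mulVec]
    calc - Matrix.trace (Δᵀ * (C * Δ))
        = ∑ b, ∑ p, Δ p b * ((-C).mulVec (fun x => Δ x b)) p := by
          rw [h1]
          rw [show ∀ f : Fin d → ℝ, -∑ b, f b = ∑ b, -(f b) from fun f => by simp]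
          exact Finset.sum_congr rfl fun b _ => (hneg b).symm
      _ ≤ ∑ b, spec (-C) * ∑ p, (Δ p b) ^ 2 := Finset.sum_le_sum fun b _ => h2 b
      _ = spec C * ∑ b, ∑ p, (Δ p b) ^ 2 := by rw [← Finset.mul_sum, spec_neg]
      _ = spec C * frob Δ ^ 2 := by rw [frob_sq, Finset.sum_comm]
  have hlin : 2 * Matrix.trace (Δᵀ * (C * H)) ≤ binf (C * H) * frob Δ ^ 2 := by
    rw [trace_blocks, frob_sq_blocks, Finset.mul_sum, Finset.mul_sum]
    refine Finset.sum_le_sum fun i _ => ?_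
    calc 2 * Matrix.trace ((blk Δ i)ᵀ * blk (C * H) i)
        ≤ spec (blk (C * H) i) * frob (blk Δ i) ^ 2 :=
          block_bound C hCsymm hCdiag hH hmax hG i
      _ ≤ binf (C * H) * frob (blk Δ i) ^ 2 := by
          refine mul_le_mul_of_nonneg_right (spec_le_binf _ i) (by positivity)
  have hrhs : (spec C + binf (C * H)) * frob Δ ^ 2
      = spec C * frob Δ ^ 2 + binf (C * H) * frob Δ ^ 2 := by ring
  linarith

lemma isHermitian_of_transpose {M : Matrix q q ℝ} (h : Mᵀ = M) : M.IsHermitian := by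
  have hct : Mᴴ = Mᵀ := by ext i j; simp [Matrix.conjTranspose_apply]
  rw [Matrix.IsHermitian, hct, h]

lemma binf_mul_orth (X : Matrix (Fin n × Fin d) (Fin d) ℝ)
    {g : Matrix (Fin d) (Fin d) ℝ} (hg : IsOd' g) : binf (X * g) = binf X := by
  unfold binf
  exact iSup_congr fun i => by rw [blk_mul]; exact spec_mul_orth _ hg


/-- cost-to-go estimate at a global maximizer.
Let `α ≥ 0`, `C` symmetric with positive semidefinite diagonal blocks, and let `Ĝ` be
a global maximizer of (QP). Then for every `G ∈ O(d)^{⊗n}`,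
`f(Ĝ) − f(G) ≤ (‖C̃‖ + ‖C̃ Ĝ‖_∞)·d(G, Ĝ)²`. -/
theorem cost_to_go_estimate {n d : ℕ}
    (C : Matrix (Fin n × Fin d) (Fin n × Fin d) ℝ) (hCsymm : Cᵀ = C)
    (hCdiag : ∀ i : Fin n, (dblk C i i).PosSemidef)
    (α : ℝ) (hα : 0 ≤ α)
    (Ct : Matrix (Fin n × Fin d) (Fin n × Fin d) ℝ)
    (hCt : Ct = C + α • (1 : Matrix (Fin n × Fin d) (Fin n × Fin d) ℝ))
    (Gh : Matrix (Fin n × Fin d) (Fin d) ℝ) (hGh : OdN Gh)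
    (hmax : ∀ G : Matrix (Fin n × Fin d) (Fin d) ℝ, OdN G → obj C G ≤ obj C Gh) :
    ∀ G : Matrix (Fin n × Fin d) (Fin d) ℝ, OdN G →
      obj C Gh - obj C G ≤ (spec Ct + binf (Ct * Gh)) * dOrth G Gh ^ 2 := by
  intro G hG
  set K := spec Ct + binf (Ct * Gh) with hKdef
  have hCtsymm : Ctᵀ = Ct := by
    rw [hCt, transpose_add, hCsymm, transpose_smul, transpose_one]
  have hCtdiag : ∀ i : Fin n, (dblk Ct i i).PosSemidef := by
    intro i
    have e : dblk Ct i i = dblk C i i + α • (1 : Matrix (Fin d) (Fin d) ℝ) := by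
      ext a b
      simp [dblk, hCt, Matrix.one_apply, Prod.ext_iff]
    rw [e]
    refine (hCdiag i).add ?_
    refine ⟨isHermitian_of_transpose (by rw [transpose_smul, transpose_one]), fun x => ?_⟩
    have hx : x ⬝ᵥ (α • (1 : Matrix (Fin d) (Fin d) ℝ)).mulVec x = α * ∑ a, (x a) ^ 2 := by
      rw [Matrix.smul_mulVec, Matrix.one_mulVec, dotProduct_smul]
      simp [dotProduct, sq, smul_eq_mul]
    have : (0:ℝ) ≤ x ⬝ᵥ (α • (1 : Matrix (Fin d) (Fin d) ℝ)).mulVec x := by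
      rw [hx]
      exact mul_nonneg hα (by positivity)
    exact finsupp_qform_nonneg this
  have hmaxCt : ∀ G', OdN G' → obj Ct G' ≤ obj Ct Gh := by
    intro G' hG'
    rw [hCt, obj_shift C α hG', obj_shift C α hGh]
    linarith [hmax G' hG']
  have hK0 : 0 ≤ K := by
    rw [hKdef]
    have h1 : (0:ℝ) ≤ binf (Ct * Gh) := Real.iSup_nonneg fun i => spec_nonneg _
    linarith [spec_nonneg Ct]
  have hper : ∀ g : Matrix (Fin d) (Fin d) ℝ, IsOd g →
      obj C Gh - obj C G ≤ K * frob (G - Gh * g) ^ 2 := by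
    intro g hg
    have hH : OdN (Gh * g) := hGh.mul_orth hg
    have hmaxH : ∀ G', OdN G' → obj Ct G' ≤ obj Ct (Gh * g) := by
      intro G' hG'
      rw [obj_mul_orth Ct Gh hg]
      exact hmaxCt G' hG'
    have hkey := key_ineq Ct hCtsymm hCtdiag hH hmaxH hG
    have hobjeq : obj Ct (Gh * g) - obj Ct G = obj C Gh - obj C G := by
      rw [obj_mul_orth Ct Gh hg, hCt, obj_shift C α hGh, obj_shift C α hG]
      ring
    have hassoc : Ct * (Gh * g) = (Ct * Gh) * g := (Matrix.mul_assoc _ _ _).symm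
    have hbinf : binf (Ct * (Gh * g)) = binf (Ct * Gh) := by
      rw [hassoc]
      exact binf_mul_orth _ (isOd_isOd' hg)
    have hfrob : frob (Gh * g - G) = frob (G - Gh * g) := frob_sub_comm _ _
    rw [hobjeq, hbinf, hfrob, ← hKdef] at hkey
    exact hkey
  have h1 : IsOd (1 : Matrix (Fin d) (Fin d) ℝ) :=
    ⟨by rw [transpose_one, Matrix.one_mul], by rw [transpose_one, Matrix.one_mul]⟩
  haveI : Nonempty {g : Matrix (Fin d) (Fin d) ℝ // IsOd g} := ⟨⟨1, h1⟩⟩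
  by_cases hL : obj C Gh - obj C G ≤ 0
  · calc obj C Gh - obj C G ≤ 0 := hL
      _ ≤ K * dOrth G Gh ^ 2 := mul_nonneg hK0 (sq_nonneg _)
  · push_neg at hL
    have hKpos : 0 < K := by
      rcases lt_or_ge 0 K with h | h
      · exact h
      · exfalso
        have h2 := hper 1 h1
        have hf : K * frob (G - Gh * (1 : Matrix (Fin d) (Fin d) ℝ)) ^ 2 ≤ 0 :=
          mul_nonpos_of_nonpos_of_nonneg h (sq_nonneg _)
        linarith
    have hLK : (0:ℝ) ≤ (obj C Gh - obj C G) / K :=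
      div_nonneg (le_of_lt hL) (le_of_lt hKpos)
    have hsq : ∀ g : {g : Matrix (Fin d) (Fin d) ℝ // IsOd g},
        Real.sqrt ((obj C Gh - obj C G) / K) ≤ frob (G - Gh * g.1) := by
      intro g
      have h2 := hper g.1 g.2
      have h3 : (obj C Gh - obj C G) / K ≤ frob (G - Gh * g.1) ^ 2 := by
        rw [div_le_iff₀ hKpos]
        calc obj C Gh - obj C G ≤ K * frob (G - Gh * g.1) ^ 2 := h2
          _ = frob (G - Gh * g.1) ^ 2 * K := mul_comm _ _
      calc Real.sqrt ((obj C Gh - obj C G) / K)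
          ≤ Real.sqrt (frob (G - Gh * g.1) ^ 2) := Real.sqrt_le_sqrt h3
        _ = frob (G - Gh * g.1) := Real.sqrt_sq (frob_nonneg _)
    have hDl : Real.sqrt ((obj C Gh - obj C G) / K) ≤ dOrth G Gh := le_ciInf hsq
    have h4 : (obj C Gh - obj C G) / K ≤ dOrth G Gh ^ 2 := by
      have h5 := pow_le_pow_left₀ (Real.sqrt_nonneg _) hDl 2
      rwa [Real.sq_sqrt hLK] at h5
    calc obj C Gh - obj C G = (obj C Gh - obj C G) / K * K := by
          field_simp
      _ ≤ dOrth G Gh ^ 2 * K := mul_le_mul_of_nonneg_right h4 (le_of_lt hKpos)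
      _ = K * dOrth G Gh ^ 2 := mul_comm _ _

end GroupSync
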